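/- For |𝒳| = n ≥ 3, if a loss function ℓ satisfies the Data Processing Axiom — C(ℓ, P_TY) ≤ C(ℓ, P_XY) for every statistically sufficient transformation T of X for Y — then C(ℓ, P_XY) = A·I(X;Y) for some constant A > 0 (or A = 0), for all joint distributions P_XY. -/

import Mathlib

open scoped BigOperators

def IsDist {α : Type*} [Fintype α] (p : α → ℝ) : Prop :=
  (∀ a, 0 ≤ p a) ∧ ∑ a, p a = 1

noncomputable def logLoss {α : Type*} (Q : α → ℝ) (x : α) : EReal :=
  if Q x = 0 then ⊤ else ((-Real.log (Q x) : ℝ) : EReal)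

noncomputable def negEnt {α : Type*} [Fintype α] (p : α → ℝ) : ℝ :=
  ∑ a, p a * Real.log (p a)

noncomputable def ent {α : Type*} [Fintype α] (p : α → ℝ) : ℝ := -negEnt p

noncomputable def margX {α β : Type*} [Fintype β] (p : α × β → ℝ) (x : α) : ℝ := ∑ y, p (x, y)

noncomputable def margY {α β : Type*} [Fintype α] (p : α × β → ℝ) (y : β) : ℝ := ∑ x, p (x, y)

noncomputable def condX {α β : Type*} [Fintype α] (p : α × β → ℝ) (y : β) (x : α) : ℝ :=
  p (x, y) / margY p y

noncomputable def mutInfo {α β : Type*} [Fintype α] [Fintype β] (p : α × β → ℝ) : ℝ :=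
  ent (margX p) + ent (margY p) - ent p

/-- The Jensen gap `Σ_y P_Y(y) G(P_{X|Y=y}) - G(P_X)` of `G` for a joint distribution. -/
noncomputable def jensenGap {α β : Type*} [Fintype α] [Fintype β]
    (G : (α → ℝ) → ℝ) (q : α × β → ℝ) : ℝ :=
  (∑ y, margY q y * G (condX q y)) - G (margX q)

/-- Marginal joint law of `(X,Y)` from a joint law of `(X,T,Y)`. -/
noncomputable def margXY {α β : Type*} [Fintype α] (r : α × α × β → ℝ) :
    α × β → ℝ := fun z => ∑ t, r (z.1, t, z.2)

/-- Marginal joint law of `(T,Y)` from a joint law of `(X,T,Y)`. -/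
noncomputable def margTY {α β : Type*} [Fintype α] (r : α × α × β → ℝ) :
    α × β → ℝ := fun z => ∑ x, r (x, z.1, z.2)

/-- The Markov chain `T – X – Y`: `T` and `Y` are conditionally independent given `X`,
expressed as `p(x,t,y)·p(x) = p(x,t)·p(x,y)`. -/
def MarkovTXY {α β : Type*} [Fintype α] [Fintype β] (r : α × α × β → ℝ) : Prop :=
  ∀ x t y, r (x, t, y) * (∑ t', ∑ y', r (x, t', y'))
    = (∑ y', r (x, t, y')) * (∑ t', r (x, t', y))

/-- The Markov chain `X – T – Y`: `X` and `Y` are conditionally independent given `T`,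
expressed as `p(x,t,y)·p(t) = p(x,t)·p(t,y)`. -/
def MarkovXTY {α β : Type*} [Fintype α] [Fintype β] (r : α × α × β → ℝ) : Prop :=
  ∀ x t y, r (x, t, y) * (∑ x', ∑ y', r (x', t, y'))
    = (∑ y', r (x, t, y')) * (∑ x', r (x', t, y))

/-- The benefit of side information `C(ℓ, P_XY)`:
optimal risk without side information minus optimal risk with side information `Y`. -/
noncomputable def benefit {α β Xh : Type*} [Fintype α] [Fintype β]
    (ℓ : α → Xh → ℝ) (q : α × β → ℝ) : ℝ :=
  (⨅ xh, ∑ x, margX q x * ℓ x xh) - ⨅ f : β → Xh, ∑ z : α × β, q z * ℓ z.1 (f z.2)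

set_option linter.unusedSectionVars false
set_option maxHeartbeats 1000000

section Aux

variable {Xh : Type*} [Nonempty Xh] {n : ℕ}

noncomputable def Fb (ℓ : Fin n → Xh → ℝ) (v : Fin n → ℝ) : ℝ := ⨅ xh, ∑ x, v x * ℓ x xh

def HFin (ℓ : Fin n → Xh → ℝ) : Prop :=
  ∀ P : Fin n → ℝ, IsDist P → BddBelow (Set.range fun xh => ∑ x, P x * ℓ x xh)

lemma bdd_of_nonneg (ℓ : Fin n → Xh → ℝ) (hfin : HFin ℓ) {v : Fin n → ℝ} (hv : ∀ x, 0 ≤ v x) :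
    BddBelow (Set.range fun xh => ∑ x, v x * ℓ x xh) := by
  by_cases hs : ∑ x, v x = 0
  · have hv0 : ∀ x, v x = 0 := fun x =>
      (Finset.sum_eq_zero_iff_of_nonneg (fun i _ => hv i)).1 hs x (Finset.mem_univ x)
    refine ⟨0, ?_⟩; rintro r ⟨xh, rfl⟩
    simp [hv0]
  · set s := ∑ x, v x with hsdef
    have hs0 : 0 < s := lt_of_le_of_ne (Finset.sum_nonneg fun i _ => hv i) (Ne.symm hs)
    have hdist : IsDist (fun x => v x / s) := by
      refine ⟨fun x => div_nonneg (hv x) hs0.le, ?_⟩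
      rw [← Finset.sum_div]
      field_simp
      exact hsdef.symm
    obtain ⟨b, hb⟩ := hfin _ hdist
    refine ⟨s * b, ?_⟩
    rintro r ⟨xh, rfl⟩
    have h1 : b ≤ ∑ x, (v x / s) * ℓ x xh := hb ⟨xh, rfl⟩
    have h2 : s * b ≤ s * ∑ x, (v x / s) * ℓ x xh := mul_le_mul_of_nonneg_left h1 hs0.le
    refine h2.trans_eq ?_
    rw [Finset.mul_sum]
    refine Finset.sum_congr rfl fun x _ => ?_
    field_simp

lemma Fb_le (ℓ : Fin n → Xh → ℝ) (hfin : HFin ℓ) {v : Fin n → ℝ} (hv : ∀ x, 0 ≤ v x) (xh : Xh) :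
    Fb ℓ v ≤ ∑ x, v x * ℓ x xh := ciInf_le (bdd_of_nonneg ℓ hfin hv) xh

lemma le_Fb (ℓ : Fin n → Xh → ℝ) {v : Fin n → ℝ} {c : ℝ} (h : ∀ xh, c ≤ ∑ x, v x * ℓ x xh) :
    c ≤ Fb ℓ v := le_ciInf h

lemma Fb_zero (ℓ : Fin n → Xh → ℝ) : Fb ℓ (fun _ => 0) = 0 := by
  simp [Fb]

lemma Fb_smul (ℓ : Fin n → Xh → ℝ) (hfin : HFin ℓ) {v : Fin n → ℝ} (hv : ∀ x, 0 ≤ v x)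
    {c : ℝ} (hc : 0 ≤ c) : Fb ℓ (fun x => c * v x) = c * Fb ℓ v := by
  rcases eq_or_lt_of_le hc with hc0 | hc0
  · simp [← hc0, Fb]
  · apply le_antisymm
    · have h1 : Fb ℓ (fun x => c * v x) / c ≤ Fb ℓ v := by
        apply le_Fb
        intro xh
        rw [div_le_iff₀' hc0]
        refine (Fb_le ℓ hfin (fun x => mul_nonneg hc (hv x)) xh).trans_eq ?_
        rw [Finset.mul_sum]
        exact Finset.sum_congr rfl fun x _ => by ring
      calc Fb ℓ (fun x => c * v x) = c * (Fb ℓ (fun x => c * v x) / c) := by field_simp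
        _ ≤ c * Fb ℓ v := mul_le_mul_of_nonneg_left h1 hc0.le
    · apply le_Fb
      intro xh
      have := Fb_le ℓ hfin hv xh
      calc c * Fb ℓ v ≤ c * ∑ x, v x * ℓ x xh := mul_le_mul_of_nonneg_left this hc0.le
        _ = ∑ x, c * v x * ℓ x xh := by rw [Finset.mul_sum]; exact Finset.sum_congr rfl fun x _ => by ring

lemma Fb_superadd (ℓ : Fin n → Xh → ℝ) (hfin : HFin ℓ) {u v : Fin n → ℝ}
    (hu : ∀ x, 0 ≤ u x) (hv : ∀ x, 0 ≤ v x) :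
    Fb ℓ u + Fb ℓ v ≤ Fb ℓ (fun x => u x + v x) := by
  apply le_Fb
  intro xh
  have h1 := Fb_le ℓ hfin hu xh
  have h2 := Fb_le ℓ hfin hv xh
  have : ∑ x, (u x + v x) * ℓ x xh = (∑ x, u x * ℓ x xh) + ∑ x, v x * ℓ x xh := by
    rw [← Finset.sum_add_distrib]; exact Finset.sum_congr rfl fun x _ => by ring
  linarith

/-- Interchange of infimum and finite sum. -/
lemma iInf_sum_eq {ι : Type*} [Fintype ι] (g : ι → Xh → ℝ)
    (hb : ∀ i, BddBelow (Set.range (g i))) :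
    ⨅ f : ι → Xh, ∑ i, g i (f i) = ∑ i, ⨅ xh, g i xh := by
  apply le_antisymm
  · refine le_of_forall_pos_le_add fun ε hε => ?_
    have hcard : (0:ℝ) < (Fintype.card ι + 1 : ℝ) := by positivity
    have hchoice : ∀ i : ι, ∃ xh : Xh, g i xh < (⨅ xh, g i xh) + ε / (Fintype.card ι + 1) := by
      intro i
      apply exists_lt_of_ciInf_lt
      have : (0:ℝ) < ε / (Fintype.card ι + 1) := by positivity
      linarith
    choose f hf using hchoice
    have h1 : (⨅ f : ι → Xh, ∑ i, g i (f i)) ≤ ∑ i, g i (f i) := by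
      apply ciInf_le
      refine ⟨∑ i, ⨅ xh, g i xh, ?_⟩
      rintro r ⟨f', rfl⟩
      exact Finset.sum_le_sum fun i _ => ciInf_le (hb i) (f' i)
    have h2 : ∑ i, g i (f i) ≤ (∑ i, ⨅ xh, g i xh) + ε := by
      have : ∑ i, g i (f i) ≤ ∑ i, ((⨅ xh, g i xh) + ε / (Fintype.card ι + 1)) :=
        Finset.sum_le_sum fun i _ => (hf i).le
      rw [Finset.sum_add_distrib] at this
      have hcc : ∑ _i : ι, ε / (Fintype.card ι + 1) = (Fintype.card ι : ℝ) * (ε / (Fintype.card ι + 1)) := by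
        rw [Finset.sum_const, nsmul_eq_mul, Finset.card_univ]
      have hle : (Fintype.card ι : ℝ) * (ε / (Fintype.card ι + 1)) ≤ ε := by
        rw [mul_div_assoc']
        rw [div_le_iff₀ hcard]
        nlinarith [hε.le]
      rw [hcc] at this
      linarith
    linarith
  · apply le_ciInf
    intro f
    exact Finset.sum_le_sum fun i _ => ciInf_le (hb i) (f i)


def HDP (ℓ : Fin n → Xh → ℝ) : Prop :=
  ∀ (Y : Type) [Fintype Y] (r : Fin n × Fin n × Y → ℝ), IsDist r →
      MarkovTXY r → MarkovXTY r → benefit ℓ (margTY r) ≤ benefit ℓ (margXY r)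

/-- The benefit as a difference of Bayes risks. -/
lemma benefit_eq (ℓ : Fin n → Xh → ℝ) (hfin : HFin ℓ) {Y : Type*} [Fintype Y]
    (q : Fin n × Y → ℝ) (hq : ∀ z, 0 ≤ q z) :
    benefit ℓ q = Fb ℓ (margX q) - ∑ y, Fb ℓ (fun x => q (x, y)) := by
  have h2 : (⨅ f : Y → Xh, ∑ z : Fin n × Y, q z * ℓ z.1 (f z.2))
      = ∑ y, Fb ℓ (fun x => q (x, y)) := by
    have hrw : ∀ f : Y → Xh, ∑ z : Fin n × Y, q z * ℓ z.1 (f z.2)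
        = ∑ y, ∑ x, q (x, y) * ℓ x (f y) := by
      intro f
      rw [Fintype.sum_prod_type_right]
    rw [show (fun f : Y → Xh => ∑ z : Fin n × Y, q z * ℓ z.1 (f z.2))
        = fun f => ∑ y, ∑ x, q (x, y) * ℓ x (f y) from funext hrw]
    exact iInf_sum_eq (fun y xh => ∑ x, q (x, y) * ℓ x xh)
      (fun y => bdd_of_nonneg ℓ hfin (fun x => hq (x, y)))
  rw [benefit, h2]
  rfl

section Push

variable (ℓ : Fin n → Xh → ℝ) {Y : Type} [Fintype Y]

/-- merged joint law along `g`. -/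
noncomputable def pushQ (g : Fin n → Fin n) (q : Fin n × Y → ℝ) : Fin n × Y → ℝ :=
  fun z => ∑ x, if g x = z.1 then q (x, z.2) else 0

lemma benefit_push (hdp : HDP ℓ) (g : Fin n → Fin n) (q : Fin n × Y → ℝ) (hq : IsDist q)
    (hC : ∀ x y, q (x, y) * (∑ x', if g x' = g x then margX q x' else 0)
        = margX q x * (∑ x', if g x' = g x then q (x', y) else 0)) :
    benefit ℓ (pushQ g q) = benefit ℓ q := by
  classical
  set r : Fin n × Fin n × Y → ℝ := fun w => if g w.1 = w.2.1 then q (w.1, w.2.2) else 0 with hr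
  set r' : Fin n × Fin n × Y → ℝ := fun w => if g w.2.1 = w.1 then q (w.2.1, w.2.2) else 0 with hr'
  have hrXY : margXY r = q := by
    funext z
    simp only [margXY, hr]
    simp
  have hrTY : margTY r = pushQ g q := by
    funext z
    simp only [margTY, hr, pushQ]
  have hr'XY : margXY r' = pushQ g q := by
    funext z
    simp only [margXY, hr', pushQ]
  have hr'TY : margTY r' = q := by
    funext z
    simp only [margTY, hr']
    simp
  -- row sums
  have hrowr : ∀ x, (∑ t', ∑ y', r (x, t', y')) = margX q x := by
    intro x
    rw [Finset.sum_comm]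
    simp only [hr]
    simp [margX]
  have hrow'r : ∀ t, (∑ x', ∑ y', r' (x', t, y')) = margX q t := by
    intro t
    simp only [hr']
    simp [margX]
  have hcol : ∀ x t, (∑ y', r (x, t, y')) = if g x = t then margX q x else 0 := by
    intro x t
    simp only [hr]
    by_cases h : g x = t <;> simp [h, margX]
  have hcol' : ∀ x t, (∑ y', r' (x, t, y')) = if g t = x then margX q t else 0 := by
    intro x t
    simp only [hr']
    by_cases h : g t = x <;> simp [h, margX]
  have hdist_r : IsDist r := by
    constructor
    · intro w
      simp only [hr]
      split
      · exact hq.1 _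
      · exact le_rfl
    · have hx : ∀ x t, (∑ y', r (x, t, y')) = if g x = t then margX q x else 0 := hcol
      calc ∑ a : Fin n × Fin n × Y, r a = ∑ x, ∑ t, ∑ y, r (x, t, y) := by
            rw [Fintype.sum_prod_type]
            exact Finset.sum_congr rfl fun x _ => by rw [Fintype.sum_prod_type]
        _ = ∑ x, ∑ t, if g x = t then margX q x else 0 := by
            exact Finset.sum_congr rfl fun x _ => Finset.sum_congr rfl fun t _ => hcol x t
        _ = ∑ x, margX q x := by
            exact Finset.sum_congr rfl fun x _ => by rw [Finset.sum_ite_eq]; simp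
        _ = 1 := by
            rw [← hq.2, Fintype.sum_prod_type]
            rfl
  have hdist_r' : IsDist r' := by
    constructor
    · intro w
      simp only [hr']
      split
      · exact hq.1 _
      · exact le_rfl
    · calc ∑ a : Fin n × Fin n × Y, r' a = ∑ x, ∑ t, ∑ y, r' (x, t, y) := by
            rw [Fintype.sum_prod_type]
            exact Finset.sum_congr rfl fun x _ => by rw [Fintype.sum_prod_type]
        _ = ∑ x, ∑ t, if g t = x then margX q t else 0 := by
            exact Finset.sum_congr rfl fun x _ => Finset.sum_congr rfl fun t _ => hcol' x t
        _ = ∑ t, margX q t := by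
            rw [Finset.sum_comm]
            exact Finset.sum_congr rfl fun t _ => by rw [Finset.sum_ite_eq]; simp
        _ = 1 := by
            rw [← hq.2, Fintype.sum_prod_type]
            rfl
  have hTXY_r : MarkovTXY r := by
    intro x t y
    rw [hrowr x, hcol x t]
    have hsum : (∑ t', r (x, t', y)) = q (x, y) := by
      simp only [hr]
      rw [Finset.sum_ite_eq]
      simp
    rw [hsum]
    simp only [hr]
    by_cases h : g x = t <;> simp [h, mul_comm]
  have hXTY_r : MarkovXTY r := by
    intro x t y
    have hss : (∑ x', ∑ y', r (x', t, y')) = ∑ x', if g x' = t then margX q x' else 0 :=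
      Finset.sum_congr rfl fun x' _ => hcol x' t
    rw [hss, hcol x t]
    have hs2 : (∑ x', r (x', t, y)) = ∑ x', if g x' = t then q (x', y) else 0 := rfl
    rw [hs2]
    simp only [hr]
    by_cases h : g x = t
    · subst h
      simpa using hC x y
    · simp [h]
  have hTXY_r' : MarkovTXY r' := by
    intro x t y
    have h1 : (∑ t', ∑ y', r' (x, t', y')) = ∑ t', if g t' = x then margX q t' else 0 :=
      Finset.sum_congr rfl fun t' _ => hcol' x t'
    rw [h1, hcol' x t]
    have h2 : (∑ t', r' (x, t', y)) = ∑ t', if g t' = x then q (t', y) else 0 := rfl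
    rw [h2]
    simp only [hr']
    by_cases h : g t = x
    · subst h
      simpa using hC t y
    · simp [h]
  have hXTY_r' : MarkovXTY r' := by
    intro x t y
    rw [hrow'r t, hcol' x t]
    have hsum : (∑ x', r' (x', t, y)) = q (t, y) := by
      simp only [hr']
      rw [Finset.sum_ite_eq]
      simp
    rw [hsum]
    simp only [hr']
    by_cases h : g t = x <;> simp [h, mul_comm]
  have h1 := hdp Y r hdist_r hTXY_r hXTY_r
  have h2 := hdp Y r' hdist_r' hTXY_r' hXTY_r'
  rw [hrXY, hrTY] at h1
  rw [hr'XY, hr'TY] at h2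
  linarith

end Push

def HDPP {Xh : Type*} [Nonempty Xh] {n : ℕ} (ℓ : Fin n → Xh → ℝ) : Prop :=
  ∀ (Y : Type) [Fintype Y] (g : Fin n → Fin n) (q : Fin n × Y → ℝ), IsDist q →
    (∀ x y, q (x, y) * (∑ x', if g x' = g x then margX q x' else 0)
        = margX q x * (∑ x', if g x' = g x then q (x', y) else 0)) →
    benefit ℓ (pushQ g q) = benefit ℓ q


/-! ### basic vectors -/

noncomputable def evec (i : Fin n) : Fin n → ℝ := fun x => if x = i then 1 else 0

def pvec (i j : Fin n) (a b : ℝ) : Fin n → ℝ := fun x => if x = i then a else if x = j then b else 0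

def restVec (i j : Fin n) (v : Fin n → ℝ) : Fin n → ℝ :=
  fun x => if x = i then 0 else if x = j then 0 else v x

def mergeVec (i j : Fin n) (v : Fin n → ℝ) : Fin n → ℝ :=
  fun x => if x = i then v i + v j else if x = j then 0 else v x

noncomputable def Kb (ℓ : Fin n → Xh → ℝ) (v : Fin n → ℝ) : ℝ :=
  Fb ℓ v - ∑ x, v x * Fb ℓ (evec x)

noncomputable def θb (ℓ : Fin n → Xh → ℝ) (i j : Fin n) (a b : ℝ) : ℝ :=
  Fb ℓ (pvec i j a b) - a * Fb ℓ (evec i) - b * Fb ℓ (evec j)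

variable (ℓ : Fin n → Xh → ℝ)

lemma pvec_smul (i j : Fin n) (a b c : ℝ) :
    (fun x => c * pvec i j a b x) = pvec i j (c * a) (c * b) := by
  funext x
  simp only [pvec]
  split <;> [skip; split] <;> simp

lemma pvec_nonneg (i j : Fin n) {a b : ℝ} (ha : 0 ≤ a) (hb : 0 ≤ b) (x : Fin n) :
    0 ≤ pvec i j a b x := by
  simp only [pvec]
  split <;> [skip; split] <;> simp [ha, hb]

lemma pvec_zero (i j : Fin n) : pvec i j 0 0 = fun _ => (0:ℝ) := by
  funext x
  simp only [pvec]
  split <;> [skip; split] <;> simp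

lemma pvec_single (i j : Fin n) (hij : i ≠ j) (a : ℝ) :
    pvec i j a 0 = fun x => a * evec i x := by
  funext x
  simp only [pvec, evec]
  by_cases h1 : x = i
  · simp [h1]
  · by_cases h2 : x = j <;> simp [h1, h2]

lemma Fb_single (hfin : HFin ℓ) (i : Fin n) {a : ℝ} (ha : 0 ≤ a) :
    Fb ℓ (fun x => a * evec i x) = a * Fb ℓ (evec i) :=
  Fb_smul ℓ hfin (fun x => by simp only [evec]; split <;> simp) ha

lemma Kb_single (hfin : HFin ℓ) (i : Fin n) {a : ℝ} (ha : 0 ≤ a) :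
    Kb ℓ (fun x => a * evec i x) = 0 := by
  rw [Kb, Fb_single ℓ hfin i ha]
  have : ∑ x, (a * evec i x) * Fb ℓ (evec x) = a * Fb ℓ (evec i) := by
    rw [Finset.sum_eq_single i]
    · simp [evec]
    · intro b _ hb
      simp [evec, hb]
    · simp
  rw [this]
  ring

lemma θb_eq_Kb (i j : Fin n) (hij : i ≠ j) (a b : ℝ) :
    θb ℓ i j a b = Kb ℓ (pvec i j a b) := by
  rw [θb, Kb]
  have : ∑ x, pvec i j a b x * Fb ℓ (evec x) = a * Fb ℓ (evec i) + b * Fb ℓ (evec j) := by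
    rw [← Finset.sum_subset (Finset.subset_univ {i, j})]
    · rw [Finset.sum_pair hij]
      simp [pvec, hij.symm, if_neg hij.symm]
    · intro x _ hx
      simp only [Finset.mem_insert, Finset.mem_singleton, not_or] at hx
      simp [pvec, hx.1, hx.2]
  rw [this]
  ring

/-! ### the merging identity -/

lemma sum_merge_g (i j : Fin n) (hij : i ≠ j) (h : Fin n → ℝ) (t : Fin n) :
    (∑ x', if (if x' = j then i else x') = t then h x' else 0)
      = (if i = t then h j else 0) + (if t = j then 0 else h t) := by
  classical
  rw [← Finset.add_sum_erase Finset.univ _ (Finset.mem_univ j)]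
  congr 1
  · simp
  · have hcg : ∀ x' ∈ Finset.univ.erase j,
        (if (if x' = j then i else x') = t then h x' else 0) = if x' = t then h x' else 0 := by
      intro x' hx'
      rw [if_neg (Finset.ne_of_mem_erase hx')]
    rw [Finset.sum_congr rfl hcg, Finset.sum_ite_eq' (Finset.univ.erase j) t h]
    by_cases ht : t = j
    · simp [ht]
    · simp [ht, Finset.mem_erase]

lemma Fb_merge (hfin : HFin ℓ) (hdpp : HDPP ℓ) (i j : Fin n) (hij : i ≠ j)
    {v : Fin n → ℝ} (hv : ∀ x, 0 ≤ v x) (hs : ∑ x, v x = 1) :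
    Fb ℓ v - Fb ℓ (pvec i j (v i) (v j)) - Fb ℓ (restVec i j v)
      = Fb ℓ (mergeVec i j v) - Fb ℓ (pvec i j (v i + v j) 0) - Fb ℓ (restVec i j v) := by
  classical
  have hji : j ≠ i := Ne.symm hij
  set g : Fin n → Fin n := fun x => if x = j then i else x with hg
  set q : Fin n × Bool → ℝ :=
    fun z => if z.2 = true then pvec i j (v i) (v j) z.1 else restVec i j v z.1 with hqdef
  have hgj : g j = i := by simp only [hg]; simp
  have hgi : g i = i := by simp only [hg]; rw [if_neg hij]
  have hgo : ∀ {x : Fin n}, x ≠ j → g x = x := by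
    intro x hx
    simp only [hg]
    rw [if_neg hx]
  have hsum : ∀ (h : Fin n → ℝ) (t : Fin n), (∑ x', if g x' = t then h x' else 0)
      = (if i = t then h j else 0) + (if t = j then 0 else h t) := by
    intro h t
    simpa only [hg] using sum_merge_g i j hij h t
  have qjt : q (j, true) = v j := by simp [hqdef, pvec, hji]
  have qit : q (i, true) = v i := by simp [hqdef, pvec]
  have qjf : q (j, false) = 0 := by simp [hqdef, restVec, hji]
  have qif : q (i, false) = 0 := by simp [hqdef, restVec]
  have qot : ∀ {x : Fin n}, x ≠ i → x ≠ j → q (x, true) = 0 := by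
    intro x h1 h2
    simp [hqdef, pvec, h1, h2]
  have qof : ∀ {x : Fin n}, x ≠ i → x ≠ j → q (x, false) = v x := by
    intro x h1 h2
    simp [hqdef, restVec, h1, h2]
  have hsplit : ∀ x, pvec i j (v i) (v j) x + restVec i j v x = v x := by
    intro x
    simp only [pvec, restVec]
    by_cases h1 : x = i
    · simp [h1, hij]
    · by_cases h2 : x = j <;> simp [h1, h2, hji]
  have hqnn : ∀ z, 0 ≤ q z := by
    rintro ⟨x, y⟩
    rcases y <;> simp only [hqdef]
    · simp only [Bool.false_eq_true, if_false, restVec]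
      by_cases h1 : x = i
      · simp [h1]
      · by_cases h2 : x = j <;> simp [h1, h2, hv x]
    · simp only [if_true]
      exact pvec_nonneg i j (hv i) (hv j) x
  have hmargX : margX q = v := by
    funext x
    simp only [margX, Fintype.sum_bool, hqdef]
    simpa using hsplit x
  have hqdist : IsDist q := by
    refine ⟨hqnn, ?_⟩
    rw [Fintype.sum_prod_type_right]
    simp only [Fintype.sum_bool]
    rw [← hs, ← Finset.sum_add_distrib]
    apply Finset.sum_congr rfl
    intro x _
    simp only [hqdef, if_true, Bool.false_eq_true, if_false]
    linarith [hsplit x]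
  have hC : ∀ x y, q (x, y) * (∑ x', if g x' = g x then margX q x' else 0)
        = margX q x * (∑ x', if g x' = g x then q (x', y) else 0) := by
    intro x y
    rw [hmargX]
    by_cases hxj : x = j
    · rw [hxj, hgj, hsum v i, hsum (fun x' => q (x', y)) i]
      simp only [eq_self_iff_true, if_true, if_neg hij]
      rcases y
      · rw [qjf, qif]
        all_goals ring
      · rw [qjt, qit]
        all_goals ring
    · by_cases hxi : x = i
      · rw [hxi, hgi, hsum v i, hsum (fun x' => q (x', y)) i]
        simp only [eq_self_iff_true, if_true, if_neg hij]
        rcases y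
        · rw [qjf, qif]
          all_goals ring
        · rw [qjt, qit]
          all_goals ring
      · rw [hgo hxj, hsum v x, hsum (fun x' => q (x', y)) x]
        simp only [if_neg (show ¬ i = x from fun h => hxi h.symm), if_neg hxj]
        ring
  have hpush := hdpp Bool g q hqdist hC
  have hpushcols : pushQ g q = fun z =>
      if z.2 = true then pvec i j (v i + v j) 0 z.1 else restVec i j v z.1 := by
    funext z
    rcases z with ⟨t, y⟩
    show (∑ x, if g x = t then q (x, y) else 0) = _
    rw [hsum (fun x' => q (x', y)) t]
    rcases y
    · simp only [Bool.false_eq_true, if_false, restVec]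
      by_cases h1 : t = i
      · subst h1
        rw [if_pos rfl, if_pos rfl, if_neg hij, qjf, qif]
        ring
      · by_cases h2 : t = j
        · subst h2
          rw [if_neg hij, if_pos rfl, if_neg h1, if_pos rfl]
          ring
        · rw [if_neg (fun h => h1 h.symm), if_neg h2, if_neg h1, if_neg h2, qof h1 h2]
          ring
    · simp only [if_true, pvec]
      by_cases h1 : t = i
      · subst h1
        rw [if_pos rfl, if_pos rfl, if_neg hij, qjt, qit]
        ring
      · by_cases h2 : t = j
        · subst h2
          rw [if_neg hij, if_pos rfl, if_neg h1, if_pos rfl]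
          ring
        · rw [if_neg (fun h => h1 h.symm), if_neg h2, if_neg h1, if_neg h2, qot h1 h2]
          ring
  have hpnn' : ∀ z, (0:ℝ) ≤ pushQ g q z := by
    rw [hpushcols]
    rintro ⟨t, y⟩
    rcases y
    · simp only [Bool.false_eq_true, if_false, restVec]
      by_cases h1 : t = i
      · simp [h1]
      · by_cases h2 : t = j <;> simp [h1, h2, hv t]
    · simp only [if_true]
      exact pvec_nonneg i j (add_nonneg (hv i) (hv j)) le_rfl t
  have hmarg' : margX (pushQ g q) = mergeVec i j v := by
    funext x
    simp only [margX, Fintype.sum_bool, hpushcols, if_true, Bool.false_eq_true, if_false]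
    simp only [mergeVec, pvec, restVec]
    by_cases h1 : x = i
    · simp [h1]
    · by_cases h2 : x = j <;> simp [h1, h2]
  have hbq := benefit_eq ℓ hfin q hqnn
  have hbq' := benefit_eq ℓ hfin (pushQ g q) hpnn'
  rw [hmargX] at hbq
  rw [hmarg'] at hbq'
  have hcols : (∑ y : Bool, Fb ℓ fun x => q (x, y))
      = Fb ℓ (restVec i j v) + Fb ℓ (pvec i j (v i) (v j)) := by
    rw [Fintype.sum_bool]
    have e1 : (fun x => q (x, true)) = pvec i j (v i) (v j) := by
      funext x
      simp [hqdef]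
    have e2 : (fun x => q (x, false)) = restVec i j v := by
      funext x
      simp [hqdef]
    rw [e1, e2]
    ring
  have hcols' : (∑ y : Bool, Fb ℓ fun x => pushQ g q (x, y))
      = Fb ℓ (restVec i j v) + Fb ℓ (pvec i j (v i + v j) 0) := by
    rw [Fintype.sum_bool]
    have e1 : (fun x => pushQ g q (x, true)) = pvec i j (v i + v j) 0 := by
      funext x
      rw [hpushcols]
      rfl
    have e2 : (fun x => pushQ g q (x, false)) = restVec i j v := by
      funext x
      rw [hpushcols]
      rfl
    rw [e1, e2]
    ring
  rw [hbq, hbq', hcols, hcols'] at hpush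
  linarith


/-! ### Kb algebra -/

lemma sum_evec_mul (i : Fin n) (c : Fin n → ℝ) : ∑ x, evec i x * c x = c i := by
  rw [Finset.sum_eq_single i]
  · simp [evec]
  · intro b _ hb
    simp [evec, hb]
  · simp

lemma Kb_zero : Kb ℓ (fun _ => 0) = 0 := by
  rw [Kb, Fb_zero]
  simp

lemma Kb_smul (hfin : HFin ℓ) {v : Fin n → ℝ} (hv : ∀ x, 0 ≤ v x) {c : ℝ} (hc : 0 ≤ c) :
    Kb ℓ (fun x => c * v x) = c * Kb ℓ v := by
  rw [Kb, Kb, Fb_smul ℓ hfin hv hc]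
  have : ∑ x, (c * v x) * Fb ℓ (evec x) = c * ∑ x, v x * Fb ℓ (evec x) := by
    rw [Finset.mul_sum]
    exact Finset.sum_congr rfl fun x _ => by ring
  rw [this]
  ring

lemma Kb_superadd (hfin : HFin ℓ) {u v : Fin n → ℝ} (hu : ∀ x, 0 ≤ u x) (hv : ∀ x, 0 ≤ v x) :
    Kb ℓ u + Kb ℓ v ≤ Kb ℓ (fun x => u x + v x) := by
  have h := Fb_superadd ℓ hfin hu hv
  have hlin : ∑ x, (u x + v x) * Fb ℓ (evec x)
      = (∑ x, u x * Fb ℓ (evec x)) + ∑ x, v x * Fb ℓ (evec x) := by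
    rw [← Finset.sum_add_distrib]
    exact Finset.sum_congr rfl fun x _ => by ring
  simp only [Kb, hlin]
  linarith

lemma θb_smul (hfin : HFin ℓ) (i j : Fin n) (hij : i ≠ j) {a b c : ℝ}
    (ha : 0 ≤ a) (hb : 0 ≤ b) (hc : 0 ≤ c) :
    θb ℓ i j (c * a) (c * b) = c * θb ℓ i j a b := by
  rw [θb_eq_Kb ℓ i j hij, θb_eq_Kb ℓ i j hij, ← pvec_smul,
    Kb_smul ℓ hfin (pvec_nonneg i j ha hb) hc]

lemma θb_zero_zero (i j : Fin n) (hij : i ≠ j) : θb ℓ i j 0 0 = 0 := by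
  rw [θb_eq_Kb ℓ i j hij, pvec_zero, Kb_zero]

lemma θb_zero_right (hfin : HFin ℓ) (i j : Fin n) (hij : i ≠ j) {a : ℝ} (ha : 0 ≤ a) :
    θb ℓ i j a 0 = 0 := by
  rw [θb_eq_Kb ℓ i j hij, pvec_single i j hij]
  exact Kb_single ℓ hfin i ha

lemma pvec_eq_add (i j : Fin n) (hij : i ≠ j) (a b : ℝ) :
    pvec i j a b = fun x => a * evec i x + b * evec j x := by
  funext x
  by_cases h1 : x = i
  · rw [h1]
    simp [pvec, evec, hij, Ne.symm hij]
    all_goals ring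
  · by_cases h2 : x = j
    · rw [h2]
      simp [pvec, evec, hij, Ne.symm hij]
      all_goals ring
    · simp [pvec, evec, h1, h2]
      all_goals ring

lemma θb_nonneg (hfin : HFin ℓ) (i j : Fin n) (hij : i ≠ j) {a b : ℝ}
    (ha : 0 ≤ a) (hb : 0 ≤ b) : 0 ≤ θb ℓ i j a b := by
  rw [θb_eq_Kb ℓ i j hij, pvec_eq_add i j hij]
  have h := Kb_superadd ℓ hfin (u := fun x => a * evec i x) (v := fun x => b * evec j x)
    (fun x => by simp only [evec]; split <;> simp [ha]) (fun x => by simp only [evec]; split <;> simp [hb])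
  rw [Kb_single ℓ hfin i ha, Kb_single ℓ hfin j hb] at h
  linarith

lemma θb_superadd (hfin : HFin ℓ) (i j : Fin n) (hij : i ≠ j) {a b a' b' : ℝ}
    (ha : 0 ≤ a) (hb : 0 ≤ b) (ha' : 0 ≤ a') (hb' : 0 ≤ b') :
    θb ℓ i j a b + θb ℓ i j a' b' ≤ θb ℓ i j (a + a') (b + b') := by
  rw [θb_eq_Kb ℓ i j hij, θb_eq_Kb ℓ i j hij, θb_eq_Kb ℓ i j hij]
  have h := Kb_superadd ℓ hfin (u := pvec i j a b) (v := pvec i j a' b')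
    (pvec_nonneg i j ha hb) (pvec_nonneg i j ha' hb')
  have he : (fun x => pvec i j a b x + pvec i j a' b' x) = pvec i j (a + a') (b + b') := by
    funext x
    by_cases h1 : x = i
    · rw [h1]
      simp [pvec, hij, Ne.symm hij]
    · by_cases h2 : x = j
      · rw [h2]
        simp [pvec, hij, Ne.symm hij]
      · simp [pvec, h1, h2]
  rwa [he] at h

/-! ### recursivity -/

lemma mergeVec_eq (i j : Fin n) (hij : i ≠ j) (v : Fin n → ℝ) :
    mergeVec i j v = fun x => v x + v j * (evec i x - evec j x) := by
  funext x
  by_cases h1 : x = i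
  · rw [h1]
    simp [mergeVec, evec, hij, Ne.symm hij]
    all_goals ring
  · by_cases h2 : x = j
    · rw [h2]
      simp [mergeVec, evec, hij, Ne.symm hij]
      all_goals ring
    · simp [mergeVec, evec, h1, h2]
      all_goals ring

lemma mergeVec_nonneg (i j : Fin n) {v : Fin n → ℝ} (hv : ∀ x, 0 ≤ v x) (x : Fin n) :
    0 ≤ mergeVec i j v x := by
  simp only [mergeVec]
  split
  · exact add_nonneg (hv i) (hv j)
  · split
    · exact le_rfl
    · exact hv x

lemma Kb_merge1 (hfin : HFin ℓ) (hdpp : HDPP ℓ) (i j : Fin n) (hij : i ≠ j)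
    {v : Fin n → ℝ} (hv : ∀ x, 0 ≤ v x) (hs : ∑ x, v x = 1) :
    Kb ℓ v = θb ℓ i j (v i) (v j) + Kb ℓ (mergeVec i j v) := by
  have hFm := Fb_merge ℓ hfin hdpp i j hij hv hs
  have hsingle : Fb ℓ (pvec i j (v i + v j) 0) = (v i + v j) * Fb ℓ (evec i) := by
    rw [pvec_single i j hij]
    exact Fb_single ℓ hfin i (add_nonneg (hv i) (hv j))
  have hlin : ∑ x, mergeVec i j v x * Fb ℓ (evec x)
      = (∑ x, v x * Fb ℓ (evec x)) + v j * Fb ℓ (evec i) - v j * Fb ℓ (evec j) := by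
    rw [mergeVec_eq i j hij v]
    have : ∀ x, (v x + v j * (evec i x - evec j x)) * Fb ℓ (evec x)
        = v x * Fb ℓ (evec x) + v j * (evec i x * Fb ℓ (evec x)) - v j * (evec j x * Fb ℓ (evec x)) := by
      intro x
      ring
    rw [Finset.sum_congr rfl fun x _ => this x]
    rw [Finset.sum_sub_distrib, Finset.sum_add_distrib, ← Finset.mul_sum, ← Finset.mul_sum,
      sum_evec_mul, sum_evec_mul]
  simp only [Kb, θb, hlin]
  rw [hsingle] at hFm
  linarith

lemma Kb_merge (hfin : HFin ℓ) (hdpp : HDPP ℓ) (i j : Fin n) (hij : i ≠ j)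
    {v : Fin n → ℝ} (hv : ∀ x, 0 ≤ v x) :
    Kb ℓ v = θb ℓ i j (v i) (v j) + Kb ℓ (mergeVec i j v) := by
  by_cases hz : ∑ x, v x = 0
  · have hv0 : ∀ x, v x = 0 := fun x =>
      (Finset.sum_eq_zero_iff_of_nonneg (fun x _ => hv x)).1 hz x (Finset.mem_univ x)
    have hveq : v = fun _ => 0 := funext hv0
    have hmv : mergeVec i j v = fun _ => 0 := by
      funext x
      simp only [mergeVec, hv0]
      split <;> [skip; split] <;> simp
    rw [hmv, hv0 i, hv0 j, hveq, Kb_zero, θb_zero_zero ℓ i j hij]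
    norm_num
  · set s := ∑ x, v x with hsdef
    have hs0 : 0 < s := lt_of_le_of_ne (Finset.sum_nonneg fun x _ => hv x) (Ne.symm hz)
    set w : Fin n → ℝ := fun x => (1/s) * v x with hw
    have hwnn : ∀ x, 0 ≤ w x := fun x => mul_nonneg (by positivity) (hv x)
    have hws : ∑ x, w x = 1 := by
      simp only [hw]
      rw [← Finset.mul_sum, ← hsdef]
      field_simp
    have h1 := Kb_merge1 ℓ hfin hdpp i j hij hwnn hws
    have hmw : mergeVec i j w = fun x => (1/s) * mergeVec i j v x := by
      funext x
      simp only [mergeVec, hw]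
      split <;> [skip; split] <;> ring
    have hKw : Kb ℓ w = (1/s) * Kb ℓ v := Kb_smul ℓ hfin hv (by positivity)
    have hKmw : Kb ℓ (mergeVec i j w) = (1/s) * Kb ℓ (mergeVec i j v) := by
      rw [hmw]
      exact Kb_smul ℓ hfin (mergeVec_nonneg i j hv) (by positivity)
    have hθw : θb ℓ i j (w i) (w j) = (1/s) * θb ℓ i j (v i) (v j) := by
      simp only [hw]
      exact θb_smul ℓ hfin i j hij (hv i) (hv j) (by positivity)
    rw [hKw, hKmw, hθw] at h1
    have : Kb ℓ v = s * ((1/s) * Kb ℓ v) := by field_simp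
    rw [this, h1]
    field_simp
    all_goals ring


/-! ### permutation invariance -/

lemma evec_nonneg (i : Fin n) (x : Fin n) : (0:ℝ) ≤ evec i x := by
  simp only [evec]
  split <;> norm_num

lemma sum_evec (i : Fin n) : ∑ x, evec i x = (1:ℝ) := by
  simp [evec]

lemma evec_self (i : Fin n) : evec i i = 1 := by simp [evec]

lemma evec_ne {i x : Fin n} (h : x ≠ i) : evec i x = 0 := by simp [evec, h]

lemma mergeVec_self (i j : Fin n) (v : Fin n → ℝ) : mergeVec i j v i = v i + v j := by
  simp [mergeVec]

lemma mergeVec_other (i j : Fin n) (v : Fin n → ℝ) {x : Fin n} (h : x ≠ i) :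
    mergeVec i j v x = if x = j then 0 else v x := by
  simp [mergeVec, h]

lemma push_single (σ : Equiv.Perm (Fin n)) (i : Fin n) (c : ℝ) (t : Fin n) :
    (∑ x, if σ x = t then c * evec i x else 0) = c * evec (σ i) t := by
  rw [Finset.sum_eq_single i]
  · by_cases h : σ i = t
    · rw [if_pos h, evec_self, show evec (σ i) t = 1 from by rw [h]; exact evec_self t]
    · rw [if_neg h, show evec (σ i) t = 0 from evec_ne (fun hh => h hh.symm)]
      ring
  · intro x _ hx
    rw [evec_ne hx]
    simp
  · simp

lemma theta_perm1 (hfin : HFin ℓ) (hdpp : HDPP ℓ) (σ : Equiv.Perm (Fin n)) (i j : Fin n)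
    (hij : i ≠ j) {a b : ℝ} (ha : 0 ≤ a) (hb : 0 ≤ b) (hs : a + b = 1) :
    θb ℓ i j a b = θb ℓ (σ i) (σ j) a b := by
  classical
  have hsij : σ i ≠ σ j := fun h => hij (σ.injective h)
  set q : Fin n × Bool → ℝ :=
    fun z => if z.2 = true then a * evec i z.1 else b * evec j z.1 with hqdef
  have hqnn : ∀ z, 0 ≤ q z := by
    rintro ⟨x, y⟩
    rcases y <;> simp only [hqdef] <;> simp only [if_true, Bool.false_eq_true, if_false]
    · exact mul_nonneg hb (evec_nonneg j x)
    · exact mul_nonneg ha (evec_nonneg i x)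
  have hmargq : margX q = pvec i j a b := by
    funext x
    rw [pvec_eq_add i j hij]
    simp only [margX, Fintype.sum_bool, hqdef]
    simp
  have hqdist : IsDist q := by
    refine ⟨hqnn, ?_⟩
    rw [Fintype.sum_prod_type]
    have : ∀ x, (∑ y : Bool, q (x, y)) = margX q x := fun x => rfl
    rw [Finset.sum_congr rfl fun x _ => this x, hmargq]
    rw [show (∑ x, pvec i j a b x) = a + b from ?_]
    · exact hs
    · rw [pvec_eq_add i j hij, Finset.sum_add_distrib, ← Finset.mul_sum, ← Finset.mul_sum,
        sum_evec, sum_evec]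
      ring
  have hsump : ∀ (h : Fin n → ℝ) (x : Fin n), (∑ x', if σ x' = σ x then h x' else 0) = h x := by
    intro h x
    simp only [Equiv.apply_eq_iff_eq]
    rw [Finset.sum_ite_eq' Finset.univ x h]
    simp
  have hC : ∀ x y, q (x, y) * (∑ x', if σ x' = σ x then margX q x' else 0)
        = margX q x * (∑ x', if σ x' = σ x then q (x', y) else 0) := by
    intro x y
    rw [hsump (margX q) x, hsump (fun x' => q (x', y)) x]
    ring
  have hpush := hdpp Bool σ q hqdist hC
  have hpushcols : pushQ (⇑σ) q = fun z =>
      if z.2 = true then a * evec (σ i) z.1 else b * evec (σ j) z.1 := by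
    funext z
    rcases z with ⟨t, y⟩
    show (∑ x, if σ x = t then q (x, y) else 0) = _
    rcases y
    · simp only [hqdef, Bool.false_eq_true, if_false]
      exact push_single σ j b t
    · simp only [hqdef, if_true]
      exact push_single σ i a t
  have hpnn : ∀ z, 0 ≤ pushQ (⇑σ) q z := by
    rw [hpushcols]
    rintro ⟨t, y⟩
    rcases y <;> simp only [if_true, Bool.false_eq_true, if_false]
    · exact mul_nonneg hb (evec_nonneg (σ j) t)
    · exact mul_nonneg ha (evec_nonneg (σ i) t)
  have hmargp : margX (pushQ (⇑σ) q) = pvec (σ i) (σ j) a b := by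
    funext x
    rw [pvec_eq_add (σ i) (σ j) hsij]
    simp only [margX, Fintype.sum_bool, hpushcols]
    simp
  have hb1 := benefit_eq ℓ hfin q hqnn
  have hb2 := benefit_eq ℓ hfin (pushQ (⇑σ) q) hpnn
  rw [hmargq] at hb1
  rw [hmargp] at hb2
  have hcols1 : (∑ y : Bool, Fb ℓ fun x => q (x, y))
      = a * Fb ℓ (evec i) + b * Fb ℓ (evec j) := by
    rw [Fintype.sum_bool]
    have e1 : (fun x => q (x, true)) = fun x => a * evec i x := rfl
    have e2 : (fun x => q (x, false)) = fun x => b * evec j x := rfl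
    rw [e1, e2, Fb_single ℓ hfin i ha, Fb_single ℓ hfin j hb]
    all_goals ring
  have hcols2 : (∑ y : Bool, Fb ℓ fun x => pushQ (⇑σ) q (x, y))
      = a * Fb ℓ (evec (σ i)) + b * Fb ℓ (evec (σ j)) := by
    rw [Fintype.sum_bool]
    have e1 : (fun x => pushQ (⇑σ) q (x, true)) = fun x => a * evec (σ i) x := by
      rw [hpushcols]
      rfl
    have e2 : (fun x => pushQ (⇑σ) q (x, false)) = fun x => b * evec (σ j) x := by
      rw [hpushcols]
      rfl
    rw [e1, e2, Fb_single ℓ hfin (σ i) ha, Fb_single ℓ hfin (σ j) hb]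
    all_goals ring
  rw [hb1, hb2, hcols1, hcols2] at hpush
  simp only [θb]
  linarith

lemma theta_pair (hfin : HFin ℓ) (hdpp : HDPP ℓ) {i j k l : Fin n} (hij : i ≠ j) (hkl : k ≠ l)
    {a b : ℝ} (ha : 0 ≤ a) (hb : 0 ≤ b) :
    θb ℓ i j a b = θb ℓ k l a b := by
  classical
  -- build a permutation sending i to k and j to l
  set τ := Equiv.swap i k with hτ
  set j' := τ j with hj'
  have hj'k : j' ≠ k := by
    intro h
    have h2 := congrArg τ h
    rw [hj'] at h2
    rw [Equiv.swap_apply_self, Equiv.swap_apply_right] at h2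
    exact hij (h2 ▸ rfl)
  set σ := τ.trans (Equiv.swap j' l) with hσ
  have hσi : σ i = k := by
    rw [hσ]
    simp only [Equiv.trans_apply]
    rw [hτ, Equiv.swap_apply_left]
    exact Equiv.swap_apply_of_ne_of_ne (Ne.symm hj'k) hkl
  have hσj : σ j = l := by
    rw [hσ]
    simp only [Equiv.trans_apply]
    rw [← hj', Equiv.swap_apply_left]
  -- normalize
  by_cases hz : a + b = 0
  · have ha0 : a = 0 := le_antisymm (by linarith) ha
    have hb0 : b = 0 := le_antisymm (by linarith) hb
    rw [ha0, hb0, θb_zero_zero ℓ i j hij, θb_zero_zero ℓ k l hkl]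
  · have hs0 : 0 < a + b := lt_of_le_of_ne (by linarith) (Ne.symm hz)
    set s := a + b with hsdef
    have h1 : θb ℓ i j (s * (a/s)) (s * (b/s)) = s * θb ℓ i j (a/s) (b/s) :=
      θb_smul ℓ hfin i j hij (by positivity) (by positivity) hs0.le
    have h2 : θb ℓ k l (s * (a/s)) (s * (b/s)) = s * θb ℓ k l (a/s) (b/s) :=
      θb_smul ℓ hfin k l hkl (by positivity) (by positivity) hs0.le
    have hmain := theta_perm1 ℓ hfin hdpp σ i j hij (a := a/s) (b := b/s)
      (by positivity) (by positivity) (by field_simp; exact hsdef.symm)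
    rw [hσi, hσj] at hmain
    have hsa : s * (a/s) = a := by field_simp
    have hsb : s * (b/s) = b := by field_simp
    rw [hsa, hsb] at h1 h2
    rw [h1, h2, hmain]

lemma theta_comm (hfin : HFin ℓ) (hdpp : HDPP ℓ) {i j : Fin n} (hij : i ≠ j)
    {a b : ℝ} (ha : 0 ≤ a) (hb : 0 ≤ b) :
    θb ℓ i j a b = θb ℓ i j b a := by
  have hpv : pvec i j a b = pvec j i b a := by
    funext x
    by_cases h1 : x = i
    · rw [h1]
      simp [pvec, hij, Ne.symm hij]
    · by_cases h2 : x = j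
      · rw [h2]
        simp [pvec, hij, Ne.symm hij]
      · simp [pvec, h1, h2]
  rw [θb_eq_Kb ℓ i j hij, hpv, ← θb_eq_Kb ℓ j i (Ne.symm hij)]
  exact theta_pair ℓ hfin hdpp (Ne.symm hij) hij hb ha

/-! ### the cocycle equation -/

lemma theta_cocycle (hfin : HFin ℓ) (hdpp : HDPP ℓ) {i0 i1 i2 : Fin n}
    (h01 : i0 ≠ i1) (h02 : i0 ≠ i2) (h12 : i1 ≠ i2)
    {a b c : ℝ} (ha : 0 ≤ a) (hb : 0 ≤ b) (hc : 0 ≤ c) :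
    θb ℓ i0 i1 a b + θb ℓ i0 i1 (a + b) c = θb ℓ i0 i1 a (b + c) + θb ℓ i0 i1 b c := by
  classical
  set w : Fin n → ℝ := fun x => if x = i0 then a else if x = i1 then b else if x = i2 then c else 0
    with hw
  have hwnn : ∀ x, 0 ≤ w x := by
    intro x
    simp only [hw]
    split
    · exact ha
    · split
      · exact hb
      · split
        · exact hc
        · exact le_rfl
  have hw0 : w i0 = a := by simp [hw]
  have hw1 : w i1 = b := by simp [hw, Ne.symm h01]
  have hw2 : w i2 = c := by simp [hw, Ne.symm h02, Ne.symm h12]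
  -- path 1 : merge i0 i1 then i0 i2
  have hp1 := Kb_merge ℓ hfin hdpp i0 i1 h01 hwnn
  set m1 := mergeVec i0 i1 w with hm1
  have hm1nn : ∀ x, 0 ≤ m1 x := mergeVec_nonneg i0 i1 hwnn
  have hm10 : m1 i0 = a + b := by simp [hm1, mergeVec, hw0, hw1]
  have hm12 : m1 i2 = c := by
    simp only [hm1, mergeVec]
    rw [if_neg (Ne.symm h02), if_neg (Ne.symm h12), hw2]
  have hp2 := Kb_merge ℓ hfin hdpp i0 i2 h02 hm1nn
  have hfin1 : mergeVec i0 i2 m1 = fun x => (a + b + c) * evec i0 x := by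
    funext x
    by_cases hx0 : x = i0
    · rw [hx0, mergeVec_self, hm10, hm12, evec_self]
      ring
    · rw [mergeVec_other i0 i2 m1 hx0, evec_ne hx0]
      by_cases hx2 : x = i2
      · rw [if_pos hx2]
        ring
      · rw [if_neg hx2, hm1, mergeVec_other i0 i1 w hx0]
        by_cases hx1 : x = i1
        · rw [if_pos hx1]
          ring
        · rw [if_neg hx1]
          simp [hw, hx0, hx1, hx2]
  have hKfin1 : Kb ℓ (mergeVec i0 i2 m1) = 0 := by
    rw [hfin1]
    exact Kb_single ℓ hfin i0 (by linarith)
  rw [hm10, hm12] at hp2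
  rw [hKfin1] at hp2
  -- path 2 : merge i1 i2 then i0 i1
  have hq1 := Kb_merge ℓ hfin hdpp i1 i2 h12 hwnn
  set m2 := mergeVec i1 i2 w with hm2
  have hm2nn : ∀ x, 0 ≤ m2 x := mergeVec_nonneg i1 i2 hwnn
  have hm20 : m2 i0 = a := by
    simp only [hm2, mergeVec]
    rw [if_neg h01, if_neg h02, hw0]
  have hm21 : m2 i1 = b + c := by simp [hm2, mergeVec, hw1, hw2]
  have hq2 := Kb_merge ℓ hfin hdpp i0 i1 h01 hm2nn
  have hfin2 : mergeVec i0 i1 m2 = fun x => (a + b + c) * evec i0 x := by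
    funext x
    by_cases hx0 : x = i0
    · rw [hx0, mergeVec_self, hm20, hm21, evec_self]
      ring
    · rw [mergeVec_other i0 i1 m2 hx0, evec_ne hx0]
      by_cases hx1 : x = i1
      · rw [if_pos hx1]
        ring
      · rw [if_neg hx1, hm2, mergeVec_other i1 i2 w hx1]
        by_cases hx2 : x = i2
        · rw [if_pos hx2]
          ring
        · rw [if_neg hx2]
          simp [hw, hx0, hx1, hx2]
  have hKfin2 : Kb ℓ (mergeVec i0 i1 m2) = 0 := by
    rw [hfin2]
    exact Kb_single ℓ hfin i0 (by linarith)
  rw [hm20, hm21] at hq2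
  rw [hKfin2] at hq2
  rw [hw0, hw1] at hp1
  rw [hw1, hw2] at hq1
  -- convert index pairs
  have e1 : θb ℓ i0 i2 (a + b) c = θb ℓ i0 i1 (a + b) c :=
    theta_pair ℓ hfin hdpp h02 h01 (by linarith) hc
  have e2 : θb ℓ i1 i2 b c = θb ℓ i0 i1 b c :=
    theta_pair ℓ hfin hdpp h12 h01 hb hc
  -- combine : Kb w = θ01 a b + θ02 (a+b) c  and  Kb w = θ12 b c + θ01 a (b+c)
  rw [hp2, e1] at hp1
  rw [hq2] at hq1
  rw [e2] at hq1
  linarith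


end Aux

noncomputable def θlog (a b : ℝ) : ℝ :=
  Real.negMulLog a + Real.negMulLog b - Real.negMulLog (a + b)

lemma θlog_smul (a b c : ℝ) : θlog (c * a) (c * b) = c * θlog a b := by
  simp only [θlog, ← mul_add, Real.negMulLog_mul]
  ring

lemma θlog_zero_right (a : ℝ) : θlog a 0 = 0 := by simp [θlog]

lemma θlog_zero_left (b : ℝ) : θlog 0 b = 0 := by simp [θlog]

theorem theta_abstract (θ : ℝ → ℝ → ℝ)
    (hsym : ∀ a b, 0 ≤ a → 0 ≤ b → θ a b = θ b a)
    (hzero : ∀ a, 0 ≤ a → θ a 0 = 0)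
    (hhomog : ∀ a b c, 0 ≤ a → 0 ≤ b → 0 ≤ c → θ (c * a) (c * b) = c * θ a b)
    (hcoc : ∀ a b c, 0 ≤ a → 0 ≤ b → 0 ≤ c →
      θ a b + θ (a + b) c = θ a (b + c) + θ b c)
    (hnn : ∀ a b, 0 ≤ a → 0 ≤ b → 0 ≤ θ a b)
    (hsup : ∀ a b a' b', 0 ≤ a → 0 ≤ b → 0 ≤ a' → 0 ≤ b' →
      θ a b + θ a' b' ≤ θ (a + a') (b + b')) :
    ∃ A : ℝ, 0 ≤ A ∧ ∀ a b, 0 ≤ a → 0 ≤ b → θ a b = A * θlog a b := by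
  classical
  have h01 : θ 0 1 = 0 := by
    rw [hsym 0 1 le_rfl zero_le_one]
    exact hzero 1 zero_le_one
  set N : ℕ → ℝ := fun k => ∑ j ∈ Finset.range k, θ j 1 with hN
  have hN0 : N 0 = 0 := by simp [hN]
  have hNsucc : ∀ k : ℕ, N (k + 1) = N k + θ k 1 := by
    intro k
    simp [hN, Finset.sum_range_succ]
  have hmono1 : ∀ x y : ℝ, 0 ≤ x → x ≤ y → θ x 1 ≤ θ y 1 := by
    intro x y hx hxy
    have h := hsup x 1 (y - x) 0 hx zero_le_one (by linarith) le_rfl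
    rw [hzero (y - x) (by linarith)] at h
    have hxyy : x + (y - x) = y := by ring
    rw [hxyy] at h
    simpa using h
  have hNadd : ∀ a b : ℕ, N (a + b) = N a + N b + θ a b := by
    intro a b
    induction b with
    | zero =>
      simp [hN0, hzero a (Nat.cast_nonneg a)]
    | succ b ih =>
      have hrw : a + (b + 1) = (a + b) + 1 := by omega
      rw [hrw, hNsucc (a + b), ih, hNsucc b]
      have hc := hcoc a b 1 (Nat.cast_nonneg a) (Nat.cast_nonneg b) zero_le_one
      push_cast
      push_cast at hc
      linarith
  have hNmul : ∀ m k : ℕ, N (m * k) = m * N k + k * N m := by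
    intro m k
    induction m with
    | zero => simp [hN0]
    | succ m ih =>
      have hrw : (m + 1) * k = m * k + k := by ring
      have hθ : θ ((m * k : ℕ) : ℝ) ((k : ℕ) : ℝ) = (k:ℝ) * θ m 1 := by
        have h := hhomog m 1 k (Nat.cast_nonneg m) zero_le_one (Nat.cast_nonneg k)
        rw [mul_one] at h
        have e : ((m * k : ℕ) : ℝ) = (k:ℝ) * (m:ℝ) := by push_cast; ring
        rw [e]
        exact h
      rw [hrw, hNadd (m * k) k, ih, hθ, hNsucc m]
      push_cast
      ring
  set φ : ℕ → ℝ := fun k => N k / k with hφ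
  have hφ0 : φ 0 = 0 := by simp [hφ, hN0]
  have hN1 : N 1 = 0 := by
    rw [hNsucc 0, hN0]
    simpa using h01
  have hφ1 : φ 1 = 0 := by simp [hφ, hN1]
  have hNle : ∀ k : ℕ, N k ≤ k * θ k 1 := by
    intro k
    have hs : ∀ j ∈ Finset.range k, θ j 1 ≤ θ k 1 := fun j hj =>
      hmono1 j k (Nat.cast_nonneg j) (Nat.cast_le.2 (Finset.mem_range.1 hj).le)
    calc N k ≤ ∑ _j ∈ Finset.range k, θ (k:ℝ) 1 := Finset.sum_le_sum hs
      _ = k * θ k 1 := by rw [Finset.sum_const, Finset.card_range, nsmul_eq_mul]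
  have hφmono : Monotone φ := by
    apply monotone_nat_of_le_succ
    intro k
    rcases Nat.eq_zero_or_pos k with hk | hk
    · rw [hk, hφ0]
      simp only [hφ, hN1]
      norm_num
    · have hk0 : (0:ℝ) < k := by exact_mod_cast hk
      simp only [hφ]
      rw [div_le_div_iff₀ hk0 (by push_cast; linarith)]
      rw [hNsucc k]
      push_cast
      nlinarith [hNle k]
  have hφnn : ∀ k, 0 ≤ φ k := by
    intro k
    rw [← hφ0]
    exact hφmono (Nat.zero_le k)
  have hφmul : ∀ m k : ℕ, 1 ≤ m → 1 ≤ k → φ (m * k) = φ m + φ k := by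
    intro m k hm hk
    have hm0 : ((m:ℝ)) ≠ 0 := Nat.cast_ne_zero.2 (by omega)
    have hk0 : ((k:ℝ)) ≠ 0 := Nat.cast_ne_zero.2 (by omega)
    simp only [hφ]
    rw [hNmul m k]
    push_cast
    field_simp
    ring
  have hφpow : ∀ m k : ℕ, 1 ≤ m → φ (m ^ k) = k * φ m := by
    intro m k hm
    induction k with
    | zero => simp [hφ1]
    | succ k ih =>
      rw [pow_succ, hφmul (m ^ k) m (Nat.one_le_pow k m (by omega)) hm, ih]
      push_cast
      ring
  set c : ℝ := φ 2 / Real.log 2 with hcdef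
  have hlog2 : (0:ℝ) < Real.log 2 := Real.log_pos (by norm_num)
  have hφ2 : 0 ≤ φ 2 := hφnn 2
  have hc : 0 ≤ c := div_nonneg hφ2 hlog2.le
  have hclog : c * Real.log 2 = φ 2 := by
    rw [hcdef]
    field_simp
  have hφlog : ∀ m : ℕ, 1 ≤ m → φ m = c * Real.log m := by
    intro m hm
    rcases eq_or_lt_of_le hm with hm1 | hm2
    · rw [← hm1]
      simp [hφ1]
    · have hm2' : 2 ≤ m := hm2
      have key : ∀ k : ℕ, 1 ≤ k → |φ m - c * Real.log m| ≤ φ 2 / k := by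
        intro k hk
        have hk0 : (0:ℝ) < k := by exact_mod_cast hk
        have hmkpos : 0 < m ^ k := pow_pos (by omega : 0 < m) k
        set a := Nat.log 2 (m ^ k) with hadef
        have h1 : 2 ^ a ≤ m ^ k := Nat.pow_log_le_self 2 hmkpos.ne'
        have h2 : m ^ k < 2 ^ (a + 1) := Nat.lt_pow_succ_log_self (by norm_num) _
        have e1 : φ (2 ^ a) = a * φ 2 := hφpow 2 a (by norm_num)
        have e2 : φ (m ^ k) = k * φ m := hφpow m k hm
        have e3 : φ (2 ^ (a + 1)) = ((a:ℝ) + 1) * φ 2 := by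
          rw [hφpow 2 (a + 1) (by norm_num)]
          push_cast
          ring
        have i1 : (a:ℝ) * φ 2 ≤ (k:ℝ) * φ m := by
          rw [← e1, ← e2]
          exact hφmono h1
        have i2 : (k:ℝ) * φ m ≤ ((a:ℝ) + 1) * φ 2 := by
          rw [← e2, ← e3]
          exact hφmono h2.le
        have l1 : (a:ℝ) * Real.log 2 ≤ (k:ℝ) * Real.log m := by
          have hle : ((2:ℝ)) ^ a ≤ ((m:ℝ)) ^ k := by exact_mod_cast h1
          have h := Real.log_le_log (by positivity) hle
          rwa [Real.log_pow, Real.log_pow] at h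
        have l2 : (k:ℝ) * Real.log m ≤ ((a:ℝ) + 1) * Real.log 2 := by
          have hle : ((m:ℝ)) ^ k ≤ ((2:ℝ)) ^ (a + 1) := by exact_mod_cast h2.le
          have h := Real.log_le_log (by positivity) hle
          rw [Real.log_pow, Real.log_pow] at h
          push_cast at h
          linarith
        have hup : (k:ℝ) * φ m - c * ((k:ℝ) * Real.log m) ≤ φ 2 := by
          have h3 : c * ((a:ℝ) * Real.log 2) ≤ c * ((k:ℝ) * Real.log m) :=
            mul_le_mul_of_nonneg_left l1 hc
          have h4 : c * ((a:ℝ) * Real.log 2) = (a:ℝ) * φ 2 := by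
            rw [← hclog]
            ring
          nlinarith [i2]
        have hlo : -(φ 2) ≤ (k:ℝ) * φ m - c * ((k:ℝ) * Real.log m) := by
          have h3 : c * ((k:ℝ) * Real.log m) ≤ c * (((a:ℝ) + 1) * Real.log 2) :=
            mul_le_mul_of_nonneg_left l2 hc
          have h4 : c * (((a:ℝ) + 1) * Real.log 2) = ((a:ℝ) + 1) * φ 2 := by
            rw [← hclog]
            ring
          nlinarith [i1]
        have h3 : φ m - c * Real.log m ≤ φ 2 / k := by
          rw [le_div_iff₀ hk0]
          nlinarith [hup]
        have h4 : -(φ 2 / k) ≤ φ m - c * Real.log m := by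
          rw [neg_le, le_div_iff₀ hk0]
          nlinarith [hlo]
        exact abs_le.2 ⟨h4, h3⟩
      by_contra hne
      have hε0 : 0 < |φ m - c * Real.log m| := abs_pos.2 (sub_ne_zero.2 hne)
      obtain ⟨k, hkgt⟩ := exists_nat_gt (φ 2 / |φ m - c * Real.log m|)
      have hkpos : (0:ℝ) < k := lt_of_le_of_lt (div_nonneg hφ2 hε0.le) hkgt
      have hk1 : 1 ≤ k := by
        by_contra h
        push_neg at h
        interval_cases k
        norm_num at hkpos
      have h1 := key k hk1
      have h2 : φ 2 / k < |φ m - c * Real.log m| := by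
        rw [div_lt_iff₀ hkpos]
        rw [div_lt_iff₀ hε0] at hkgt
        linarith
      linarith
  have hNlog : ∀ k : ℕ, N k = c * ((k:ℝ) * Real.log k) := by
    intro k
    rcases Nat.eq_zero_or_pos k with hk | hk
    · rw [hk]
      simp [hN0]
    · have hk0 : ((k:ℝ)) ≠ 0 := Nat.cast_ne_zero.2 (by omega)
      have h := hφlog k hk
      simp only [hφ] at h
      rw [div_eq_iff hk0] at h
      rw [h]
      ring
  have hθnat : ∀ a b : ℕ, θ a b = c * θlog a b := by
    intro a b
    have h := hNadd a b
    have e : θ (a:ℝ) b = N (a + b) - N a - N b := by linarith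
    rw [e, hNlog (a + b), hNlog a, hNlog b]
    simp only [θlog, Real.negMulLog]
    push_cast
    ring
  have hfconc : ConcaveOn ℝ (Set.Icc (0:ℝ) 1) (fun x => θ x (1 - x)) := by
    refine ⟨convex_Icc 0 1, ?_⟩
    intro x hx y hy p q hp hq hpq
    simp only [smul_eq_mul]
    have hsplit : 1 - (p * x + q * y) = p * (1 - x) + q * (1 - y) := by
      linear_combination -hpq
    rw [hsplit]
    have h1 := hsup (p * x) (p * (1 - x)) (q * y) (q * (1 - y))
      (mul_nonneg hp hx.1) (mul_nonneg hp (by linarith [hx.2])) (mul_nonneg hq hy.1)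
      (mul_nonneg hq (by linarith [hy.2]))
    have h2 : θ (p * x) (p * (1 - x)) = p * θ x (1 - x) :=
      hhomog x (1 - x) p hx.1 (by linarith [hx.2]) hp
    have h3 : θ (q * y) (q * (1 - y)) = q * θ y (1 - y) :=
      hhomog y (1 - y) q hy.1 (by linarith [hy.2]) hq
    rw [h2, h3] at h1
    exact h1
  have hfcont : ContinuousOn (fun x => θ x (1 - x)) (Set.Ioo (0:ℝ) 1) :=
    ConcaveOn.continuousOn isOpen_Ioo (hfconc.subset Set.Ioo_subset_Icc_self (convex_Ioo 0 1))
  have hflogcont : Continuous (fun x : ℝ => c * θlog x (1 - x)) := by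
    unfold θlog
    fun_prop
  have hfrac : ∀ a k : ℕ, a ≤ k → 1 ≤ k →
      θ ((a:ℝ)/(k:ℝ)) (1 - (a:ℝ)/(k:ℝ)) = c * θlog ((a:ℝ)/(k:ℝ)) (1 - (a:ℝ)/(k:ℝ)) := by
    intro a k hak hk
    have hk0 : (0:ℝ) < k := by exact_mod_cast hk
    have hk0' : ((k:ℝ)) ≠ 0 := hk0.ne'
    have h1 : 1 - (a:ℝ)/k = ((k - a : ℕ) : ℝ)/k := by
      rw [Nat.cast_sub hak]
      field_simp
    have h2 : (k:ℝ) * ((a:ℝ)/k) = a := by field_simp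
    have h3 : (k:ℝ) * (((k - a:ℕ):ℝ)/k) = ((k - a:ℕ):ℝ) := by field_simp
    have hh := hhomog ((a:ℝ)/k) (((k - a:ℕ):ℝ)/k) k (by positivity) (by positivity) hk0.le
    rw [h2, h3] at hh
    have hl := θlog_smul ((a:ℝ)/k) (((k - a:ℕ):ℝ)/k) k
    rw [h2, h3] at hl
    have hnat := hθnat a (k - a)
    rw [h1]
    have hkey : (k:ℝ) * θ ((a:ℝ)/k) (((k - a:ℕ):ℝ)/k)
        = (k:ℝ) * (c * θlog ((a:ℝ)/k) (((k - a:ℕ):ℝ)/k)) := by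
      rw [← hh, hnat, hl]
      ring
    exact mul_left_cancel₀ hk0' hkey
  have hIoo : ∀ x ∈ Set.Ioo (0:ℝ) 1, θ x (1 - x) = c * θlog x (1 - x) := by
    intro x hx
    have hxpos := hx.1
    have hxlt := hx.2
    set s : ℕ → ℝ := fun k => ((⌊x * ((k:ℝ) + 1)⌋₊ : ℕ) : ℝ) / ((k:ℝ) + 1) with hs
    have hkpos : ∀ k : ℕ, (0:ℝ) < (k:ℝ) + 1 := fun k => by positivity
    have hfl : ∀ k : ℕ, (⌊x * ((k:ℝ) + 1)⌋₊ : ℝ) ≤ x * ((k:ℝ) + 1) :=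
      fun k => Nat.floor_le (by positivity)
    have hfg : ∀ k : ℕ, x * ((k:ℝ) + 1) < (⌊x * ((k:ℝ) + 1)⌋₊ : ℝ) + 1 :=
      fun k => Nat.lt_floor_add_one _
    have hsle : ∀ k, s k ≤ x := by
      intro k
      rw [hs]
      simp only
      rw [div_le_iff₀ (hkpos k)]
      exact hfl k
    have hsge : ∀ k : ℕ, x - 1/((k:ℝ) + 1) ≤ s k := by
      intro k
      rw [hs]
      simp only
      rw [le_div_iff₀ (hkpos k)]
      have expand : (x - 1/((k:ℝ) + 1)) * ((k:ℝ) + 1) = x * ((k:ℝ) + 1) - 1 := by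
        field_simp
      rw [expand]
      linarith [hfg k]
    have htends : Filter.Tendsto s Filter.atTop (nhds x) := by
      have h0 : Filter.Tendsto (fun k : ℕ => 1/((k:ℝ) + 1)) Filter.atTop (nhds 0) :=
        tendsto_one_div_add_atTop_nhds_zero_nat
      have hl : Filter.Tendsto (fun k : ℕ => x - 1/((k:ℝ) + 1)) Filter.atTop (nhds x) := by
        have h1 : Filter.Tendsto (fun _ : ℕ => x) Filter.atTop (nhds x) := tendsto_const_nhds
        have := h1.sub h0
        simpa using this
      exact tendsto_of_tendsto_of_tendsto_of_le_of_le hl tendsto_const_nhds hsge hsle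
    have heq : ∀ k : ℕ, θ (s k) (1 - s k) = c * θlog (s k) (1 - s k) := by
      intro k
      have hak : ⌊x * ((k:ℝ) + 1)⌋₊ ≤ k + 1 := by
        have hlt : (⌊x * ((k:ℝ) + 1)⌋₊ : ℝ) < (k:ℝ) + 1 :=
          lt_of_le_of_lt (hfl k) (by nlinarith [hkpos k])
        exact_mod_cast hlt.le
      have h := hfrac ⌊x * ((k:ℝ) + 1)⌋₊ (k + 1) hak (by omega)
      rw [hs]
      simp only
      have hcast : (((k + 1 : ℕ)):ℝ) = (k:ℝ) + 1 := by push_cast; ring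
      rw [hcast] at h
      exact h
    have hA : Filter.Tendsto (fun k => θ (s k) (1 - s k)) Filter.atTop
        (nhds (θ x (1 - x))) := by
      have hca : ContinuousAt (fun y => θ y (1 - y)) x :=
        hfcont.continuousAt (isOpen_Ioo.mem_nhds hx)
      exact hca.tendsto.comp htends
    have hB : Filter.Tendsto (fun k => c * θlog (s k) (1 - s k)) Filter.atTop
        (nhds (c * θlog x (1 - x))) :=
      hflogcont.continuousAt.tendsto.comp htends
    have heqf : (fun k => θ (s k) (1 - s k)) = fun k => c * θlog (s k) (1 - s k) :=
      funext heq
    rw [heqf] at hA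
    exact tendsto_nhds_unique hA hB
  refine ⟨c, hc, ?_⟩
  intro a b ha hb
  rcases eq_or_lt_of_le ha with ha0 | ha0
  · rw [← ha0, hsym 0 b le_rfl hb, hzero b hb, θlog_zero_left]
    ring
  · rcases eq_or_lt_of_le hb with hb0 | hb0
    · rw [← hb0, hzero a ha, θlog_zero_right]
      ring
    · set s := a + b with hsab
      have hs0 : 0 < s := by linarith
      have ht1 : a / s < 1 := by
        rw [div_lt_one hs0]
        linarith
      have ht0 : 0 < a / s := by positivity
      have hkey := hIoo (a / s) ⟨ht0, ht1⟩
      have h1mt : 1 - a / s = b / s := by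
        field_simp
        rw [hsab]
        ring
      have e1 : s * (a / s) = a := by field_simp
      have e2 : s * (b / s) = b := by field_simp
      have hh := hhomog (a / s) (b / s) s (by positivity) (by positivity) hs0.le
      rw [e1, e2] at hh
      have hl := θlog_smul (a / s) (b / s) s
      rw [e1, e2] at hl
      rw [h1mt] at hkey
      rw [hh, hkey, hl]
      ring


section Aux2
variable {Xh : Type*} [Nonempty Xh] {n : ℕ}

noncomputable def Flog (v : Fin n → ℝ) : ℝ :=
  (∑ x, Real.negMulLog (v x)) - Real.negMulLog (∑ x, v x)

lemma sum_split (i j : Fin n) (hij : i ≠ j) (f : Fin n → ℝ) :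
    ∑ x, f x = f i + f j + ∑ x ∈ (Finset.univ.erase i).erase j, f x := by
  rw [← Finset.add_sum_erase _ f (Finset.mem_univ i)]
  rw [← Finset.add_sum_erase _ f (Finset.mem_erase.2 ⟨Ne.symm hij, Finset.mem_univ j⟩)]
  ring

lemma Flog_single (i : Fin n) (c : ℝ) : Flog (fun x => c * evec i x) = 0 := by
  have h1 : ∑ x, Real.negMulLog (c * evec i x) = Real.negMulLog c := by
    rw [Finset.sum_eq_single i]
    · rw [evec_self, mul_one]
    · intro x _ hx
      rw [evec_ne hx, mul_zero, Real.negMulLog_zero]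
    · simp
  have h2 : ∑ x, c * evec i x = c := by
    rw [Finset.sum_eq_single i]
    · rw [evec_self, mul_one]
    · intro x _ hx
      rw [evec_ne hx, mul_zero]
    · simp
  rw [Flog, h1, h2, sub_self]

lemma Flog_merge (i j : Fin n) (hij : i ≠ j) (v : Fin n → ℝ) :
    Flog v = θlog (v i) (v j) + Flog (mergeVec i j v) := by
  have hsum : ∑ x, mergeVec i j v x = ∑ x, v x := by
    rw [sum_split i j hij (mergeVec i j v), sum_split i j hij v]
    rw [mergeVec_self]
    rw [show mergeVec i j v j = 0 from by
      rw [mergeVec_other i j v (Ne.symm hij), if_pos rfl]]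
    have : ∀ x ∈ (Finset.univ.erase i).erase j, mergeVec i j v x = v x := by
      intro x hx
      have hxj : x ≠ j := Finset.ne_of_mem_erase hx
      have hxi : x ≠ i := Finset.ne_of_mem_erase (Finset.mem_of_mem_erase hx)
      rw [mergeVec_other i j v hxi, if_neg hxj]
    rw [Finset.sum_congr rfl this]
    ring
  have hnml : ∑ x, Real.negMulLog (mergeVec i j v x)
      = (∑ x, Real.negMulLog (v x)) - Real.negMulLog (v i) - Real.negMulLog (v j)
        + Real.negMulLog (v i + v j) := by
    rw [sum_split i j hij (fun x => Real.negMulLog (mergeVec i j v x)),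
      sum_split i j hij (fun x => Real.negMulLog (v x))]
    rw [mergeVec_self]
    rw [show mergeVec i j v j = 0 from by
      rw [mergeVec_other i j v (Ne.symm hij), if_pos rfl]]
    have : ∀ x ∈ (Finset.univ.erase i).erase j,
        Real.negMulLog (mergeVec i j v x) = Real.negMulLog (v x) := by
      intro x hx
      have hxj : x ≠ j := Finset.ne_of_mem_erase hx
      have hxi : x ≠ i := Finset.ne_of_mem_erase (Finset.mem_of_mem_erase hx)
      rw [mergeVec_other i j v hxi, if_neg hxj]
    rw [Finset.sum_congr rfl this, Real.negMulLog_zero]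
    ring
  rw [Flog, Flog, hsum, hnml, θlog]
  ring

lemma ent_eq {α : Type*} [Fintype α] (p : α → ℝ) : ent p = ∑ a, Real.negMulLog (p a) := by
  rw [ent, negEnt, ← Finset.sum_neg_distrib]
  exact Finset.sum_congr rfl fun a _ => by rw [Real.negMulLog]; ring

lemma mutInfo_Flog {Y : Type*} [Fintype Y] (q : Fin n × Y → ℝ) (hq : IsDist q) :
    mutInfo q = Flog (margX q) - ∑ y, Flog (fun x => q (x, y)) := by
  have hmX : ∑ x, margX q x = 1 := by
    rw [← hq.2, Fintype.sum_prod_type]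
    rfl
  have h1 : Flog (margX q) = ent (margX q) := by
    rw [Flog, hmX, Real.negMulLog_one, sub_zero, ent_eq]
  have h2 : ∀ y, Flog (fun x => q (x, y))
      = (∑ x, Real.negMulLog (q (x, y))) - Real.negMulLog (margY q y) := by
    intro y
    rw [Flog, margY]
  have h3 : (∑ y, Flog (fun x => q (x, y)))
      = ent q - ent (margY q) := by
    rw [Finset.sum_congr rfl fun y _ => h2 y, Finset.sum_sub_distrib]
    rw [ent_eq q, ent_eq (margY q), Fintype.sum_prod_type_right]
  rw [h1, h3, mutInfo]
  ring


lemma hdp_to_hdpp {Xh : Type*} [Nonempty Xh] {n : ℕ} (ℓ : Fin n → Xh → ℝ) (hdp : HDP ℓ) :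
    HDPP ℓ := by
  intro Y _ g q hq hC
  exact benefit_push ℓ hdp g q hq hC

lemma Kb_eq_A_Flog {Xh : Type*} [Nonempty Xh] {n : ℕ} (hn : 3 ≤ n) (ℓ : Fin n → Xh → ℝ)
    (hfin : HFin ℓ) (hdpp : HDPP ℓ) :
    ∃ A : ℝ, 0 ≤ A ∧ ∀ v : Fin n → ℝ, (∀ x, 0 ≤ v x) → Kb ℓ v = A * Flog v := by
  classical
  set i0 : Fin n := ⟨0, by omega⟩ with hi0
  set i1 : Fin n := ⟨1, by omega⟩ with hi1
  set i2 : Fin n := ⟨2, by omega⟩ with hi2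
  have h01 : i0 ≠ i1 := by rw [hi0, hi1]; exact Fin.ne_of_val_ne (by norm_num)
  have h02 : i0 ≠ i2 := by rw [hi0, hi2]; exact Fin.ne_of_val_ne (by norm_num)
  have h12 : i1 ≠ i2 := by rw [hi1, hi2]; exact Fin.ne_of_val_ne (by norm_num)
  obtain ⟨A, hA, hAeq⟩ := theta_abstract (θb ℓ i0 i1)
    (fun a b ha hb => theta_comm ℓ hfin hdpp h01 ha hb)
    (fun a ha => θb_zero_right ℓ hfin i0 i1 h01 ha)
    (fun a b c ha hb hc => θb_smul ℓ hfin i0 i1 h01 ha hb hc)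
    (fun a b c ha hb hc => theta_cocycle ℓ hfin hdpp h01 h02 h12 ha hb hc)
    (fun a b ha hb => θb_nonneg ℓ hfin i0 i1 h01 ha hb)
    (fun a b a' b' ha hb ha' hb' => θb_superadd ℓ hfin i0 i1 h01 ha hb ha' hb')
  refine ⟨A, hA, ?_⟩
  have main : ∀ (k : ℕ) (v : Fin n → ℝ), (∀ x, 0 ≤ v x) →
      (Finset.univ.filter (fun x => x ≠ i0 ∧ v x ≠ 0)).card ≤ k → Kb ℓ v = A * Flog v := by
    intro k
    induction k with
    | zero =>
      intro v hv hcard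
      have hemp : Finset.univ.filter (fun x => x ≠ i0 ∧ v x ≠ 0) = ∅ :=
        Finset.card_eq_zero.1 (Nat.le_zero.1 hcard)
      have hvx : ∀ x, x ≠ i0 → v x = 0 := by
        intro x hx
        by_contra hx0
        have hmem : x ∈ Finset.univ.filter (fun x => x ≠ i0 ∧ v x ≠ 0) :=
          Finset.mem_filter.2 ⟨Finset.mem_univ x, hx, hx0⟩
        rw [hemp] at hmem
        exact absurd hmem (Finset.notMem_empty x)
      have hveq : v = fun x => v i0 * evec i0 x := by
        funext x
        by_cases hx : x = i0
        · rw [hx, evec_self, mul_one]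
        · rw [hvx x hx, evec_ne hx, mul_zero]
      rw [hveq, Kb_single ℓ hfin i0 (hv i0), Flog_single, mul_zero]
    | succ k ih =>
      intro v hv hcard
      by_cases hex : ∃ j, j ≠ i0 ∧ v j ≠ 0
      · obtain ⟨j, hj0, hjv⟩ := hex
        have hij : i0 ≠ j := Ne.symm hj0
        have hKm := Kb_merge ℓ hfin hdpp i0 j hij hv
        have hFm := Flog_merge i0 j hij v
        have hθA : θb ℓ i0 j (v i0) (v j) = A * θlog (v i0) (v j) := by
          rw [theta_pair ℓ hfin hdpp hij h01 (hv i0) (hv j)]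
          exact hAeq (v i0) (v j) (hv i0) (hv j)
        have hm_nn : ∀ x, 0 ≤ mergeVec i0 j v x := mergeVec_nonneg i0 j hv
        have hsubset : Finset.univ.filter (fun x => x ≠ i0 ∧ mergeVec i0 j v x ≠ 0)
            ⊆ (Finset.univ.filter (fun x => x ≠ i0 ∧ v x ≠ 0)).erase j := by
          intro x hx
          rw [Finset.mem_filter] at hx
          obtain ⟨-, hx0, hxv⟩ := hx
          have hxj : x ≠ j := by
            intro h
            apply hxv
            rw [h, mergeVec_other i0 j v hj0, if_pos rfl]
          rw [Finset.mem_erase]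
          refine ⟨hxj, Finset.mem_filter.2 ⟨Finset.mem_univ x, hx0, ?_⟩⟩
          rw [mergeVec_other i0 j v hx0, if_neg hxj] at hxv
          exact hxv
        have hjmem : j ∈ Finset.univ.filter (fun x => x ≠ i0 ∧ v x ≠ 0) :=
          Finset.mem_filter.2 ⟨Finset.mem_univ j, hj0, hjv⟩
        have hcard' : (Finset.univ.filter
            (fun x => x ≠ i0 ∧ mergeVec i0 j v x ≠ 0)).card ≤ k := by
          have hle1 : (Finset.univ.filter (fun x => x ≠ i0 ∧ mergeVec i0 j v x ≠ 0)).card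
              ≤ ((Finset.univ.filter (fun x => x ≠ i0 ∧ v x ≠ 0)).erase j).card :=
            Finset.card_le_card hsubset
          have hle2 : ((Finset.univ.filter (fun x => x ≠ i0 ∧ v x ≠ 0)).erase j).card
              = (Finset.univ.filter (fun x => x ≠ i0 ∧ v x ≠ 0)).card - 1 :=
            Finset.card_erase_of_mem hjmem
          have hpos : 1 ≤ (Finset.univ.filter (fun x => x ≠ i0 ∧ v x ≠ 0)).card :=
            Finset.card_pos.2 ⟨j, hjmem⟩
          omega
        have hrec := ih (mergeVec i0 j v) hm_nn hcard'
        rw [hKm, hθA, hrec, hFm]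
        ring
      · push_neg at hex
        have hemp : Finset.univ.filter (fun x => x ≠ i0 ∧ v x ≠ 0) = ∅ := by
          rw [Finset.filter_eq_empty_iff]
          intro x _
          push_neg
          intro hx
          exact hex x hx
        exact ih v hv (by rw [hemp]; simp)
  intro v hv
  exact main _ v hv le_rfl

lemma benefit_Kb {Xh : Type*} [Nonempty Xh] {n : ℕ} (ℓ : Fin n → Xh → ℝ) (hfin : HFin ℓ)
    {Y : Type*} [Fintype Y] (q : Fin n × Y → ℝ) (hq : ∀ z, 0 ≤ q z) :
    benefit ℓ q = Kb ℓ (margX q) - ∑ y, Kb ℓ (fun x => q (x, y)) := by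
  rw [benefit_eq ℓ hfin q hq]
  have h1 : ∀ y, Fb ℓ (fun x => q (x, y))
      = Kb ℓ (fun x => q (x, y)) + ∑ x, q (x, y) * Fb ℓ (evec x) := by
    intro y
    rw [Kb]
    ring
  rw [Finset.sum_congr rfl fun y _ => h1 y, Finset.sum_add_distrib]
  have h2 : ∑ y, ∑ x, q (x, y) * Fb ℓ (evec x) = ∑ x, margX q x * Fb ℓ (evec x) := by
    rw [Finset.sum_comm]
    exact Finset.sum_congr rfl fun x _ => by rw [margX, Finset.sum_mul]
  rw [h2, Kb]
  ring

end Aux2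

/-- Main theorem, `n ≥ 3`.  If a loss function satisfies the Data
Processing Axiom (`C(ℓ,P_TY) ≤ C(ℓ,P_XY)` for every statistically sufficient
transformation `T` of `X` for `Y`), then the benefit of side information is a
nonnegative multiple of mutual information for every joint distribution. -/
theorem DPA_implies_benefit_is_mutual_information {Xh : Type*} [Nonempty Xh]
    {n : ℕ} (hn : 3 ≤ n) (ℓ : Fin n → Xh → ℝ)
    (hfin : ∀ P : Fin n → ℝ, IsDist P →
      BddBelow (Set.range fun xh => ∑ x, P x * ℓ x xh))
    (hdp : ∀ (Y : Type) [Fintype Y] (r : Fin n × Fin n × Y → ℝ), IsDist r →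
      MarkovTXY r → MarkovXTY r → benefit ℓ (margTY r) ≤ benefit ℓ (margXY r)) :
    ∃ A : ℝ, 0 ≤ A ∧
      ∀ (Y : Type) [Fintype Y] (q : Fin n × Y → ℝ), IsDist q →
        benefit ℓ q = A * mutInfo q := by
  classical
  obtain ⟨A, hA, hKA⟩ := Kb_eq_A_Flog hn ℓ hfin (hdp_to_hdpp ℓ hdp)
  refine ⟨A, hA, ?_⟩
  intro Y _ q hq
  have hqnn : ∀ z, 0 ≤ q z := hq.1
  have hmnn : ∀ x, 0 ≤ margX q x := fun x => Finset.sum_nonneg fun y _ => hqnn (x, y)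
  rw [benefit_Kb ℓ hfin q hqnn, mutInfo_Flog q hq]
  rw [hKA (margX q) hmnn]
  have hcol : ∀ y, Kb ℓ (fun x => q (x, y)) = A * Flog (fun x => q (x, y)) :=
    fun y => hKA _ (fun x => hqnn (x, y))
  rw [Finset.sum_congr rfl fun y _ => hcol y, ← Finset.mul_sum]
  ring
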